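/- Let M ≥ 2 and S ≥ 1 be integers, n = M^S, and let A = (a_1, …, a_n) be a sequence of nonnegative real numbers with ∑_{x=1}^{n} a_x > 0. Then treemd_{M,S}(A) ≤ (∑_{x=1}^{n} a_x) · sqrt( 2·S·ln( n·(max_x a_x) / (∑_{x=1}^{n} a_x) ) ). -/

import Mathlib

/-- Sum of the sequence `A` over the interval of indices `(l, r] = {l+1, …, r}`. -/
noncomputable def iSum (A : ℕ → ℝ) (l r : ℕ) : ℝ := ∑ x ∈ Finset.Ioc l r, A x

/-- Total deviation `md_M` of the scale-`s` interval `(l, l + M^s]` of the sequence `A`. -/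
noncomputable def mdAt (M s l : ℕ) (A : ℕ → ℝ) : ℝ :=
  ∑ i ∈ Finset.range M,
    |iSum A (l + i * M ^ (s - 1)) (l + (i + 1) * M ^ (s - 1)) -
      (1 / (M : ℝ)) * iSum A l (l + M ^ s)|

/-- Tree total deviation `treemd_{M,S}` of the sequence `A` (indexed by `{1, …, M^S}`). -/
noncomputable def treemd (M S : ℕ) (A : ℕ → ℝ) : ℝ :=
  ∑ s ∈ Finset.Icc 1 S, ∑ k ∈ Finset.range (M ^ (S - s)), mdAt M s (k * M ^ s) A


private lemma log_ge_one_sub_inv {r : ℝ} (hr : 0 < r) : 1 - 1/r ≤ Real.log r := by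
  have h := Real.log_le_sub_one_of_pos (x := 1/r) (by positivity)
  rw [one_div, Real.log_inv] at h
  rw [one_div]
  linarith

private lemma hfun_hasDeriv {r : ℝ} (hr : 0 < r) :
    HasDerivAt (fun x : ℝ => (x+1)*Real.log x - 2*(x-1)) (Real.log r + 1/r - 1) r := by
  have h1 : HasDerivAt (fun x : ℝ => (x+1)*Real.log x)
      (1 * Real.log r + (r+1) * r⁻¹) r :=
    ((hasDerivAt_id r).add_const 1).mul (Real.hasDerivAt_log hr.ne')
  have h2 : HasDerivAt (fun x : ℝ => 2*(x-1)) (2*1) r :=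
    ((hasDerivAt_id r).sub_const 1).const_mul 2
  have := h1.sub h2
  refine this.congr_deriv ?_
  field_simp
  ring

private lemma hfun_nonneg {r : ℝ} (hr : 1 ≤ r) : 0 ≤ (r+1)*Real.log r - 2*(r-1) := by
  have hmono : MonotoneOn (fun x : ℝ => (x+1)*Real.log x - 2*(x-1)) (Set.Ioi 0) := by
    apply monotoneOn_of_deriv_nonneg (convex_Ioi 0)
    · intro x hx
      exact (hfun_hasDeriv (Set.mem_Ioi.1 hx)).continuousAt.continuousWithinAt
    · intro x hx
      rw [interior_Ioi] at hx
      exact (hfun_hasDeriv (Set.mem_Ioi.1 hx)).differentiableAt.differentiableWithinAt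
    · intro x hx
      rw [interior_Ioi] at hx
      have hx0 : (0:ℝ) < x := hx
      rw [(hfun_hasDeriv hx0).deriv]
      have := log_ge_one_sub_inv hx0
      linarith
  have h0 : (0:ℝ) < 1 := one_pos
  have := hmono (Set.mem_Ioi.2 h0) (Set.mem_Ioi.2 (lt_of_lt_of_le h0 hr)) hr
  simp at this
  linarith [this]

private lemma hfun_nonpos {r : ℝ} (hr0 : 0 < r) (hr : r ≤ 1) :
    (r+1)*Real.log r - 2*(r-1) ≤ 0 := by
  have hmono : MonotoneOn (fun x : ℝ => (x+1)*Real.log x - 2*(x-1)) (Set.Ioi 0) := by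
    apply monotoneOn_of_deriv_nonneg (convex_Ioi 0)
    · intro x hx
      exact (hfun_hasDeriv (Set.mem_Ioi.1 hx)).continuousAt.continuousWithinAt
    · intro x hx
      rw [interior_Ioi] at hx
      exact (hfun_hasDeriv (Set.mem_Ioi.1 hx)).differentiableAt.differentiableWithinAt
    · intro x hx
      rw [interior_Ioi] at hx
      have hx0 : (0:ℝ) < x := hx
      rw [(hfun_hasDeriv hx0).deriv]
      have := log_ge_one_sub_inv hx0
      linarith
  have := hmono (Set.mem_Ioi.2 hr0) (Set.mem_Ioi.2 one_pos) hr
  simp at this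
  linarith [this]


private noncomputable def gfun (x : ℝ) : ℝ := (2*x+4)*(x*Real.log x - x + 1) - 3*(x-1)^2

private lemma gfun_hasDeriv {r : ℝ} (hr : 0 < r) :
    HasDerivAt gfun (4*((r+1)*Real.log r - 2*(r-1))) r := by
  have hlog : HasDerivAt (fun x : ℝ => x*Real.log x) (1 * Real.log r + r * r⁻¹) r :=
    (hasDerivAt_id r).mul (Real.hasDerivAt_log hr.ne')
  have h1 : HasDerivAt (fun x : ℝ => x*Real.log x - x + 1)
      (1 * Real.log r + r * r⁻¹ - 1) r := (hlog.sub (hasDerivAt_id r)).add_const 1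
  have h2 : HasDerivAt (fun x : ℝ => 2*x+4) 2 r := by
    simpa using ((hasDerivAt_id r).const_mul 2).add_const 4
  have h3 : HasDerivAt (fun x : ℝ => 3*(x-1)^2) (3*(2*(r-1)^1*1)) r :=
    (((hasDerivAt_id r).sub_const 1).pow 2).const_mul 3
  have := (h2.mul h1).sub h3
  refine this.congr_deriv ?_
  have : r * r⁻¹ = 1 := mul_inv_cancel₀ hr.ne'
  rw [this]
  ring

private lemma gfun_nonneg {r : ℝ} (hr : 0 ≤ r) : 0 ≤ gfun r := by
  have hg1 : gfun 1 = 0 := by simp [gfun]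
  rcases le_or_gt 1 r with h | h
  · have hmono : MonotoneOn gfun (Set.Ici 1) := by
      apply monotoneOn_of_deriv_nonneg (convex_Ici 1)
      · intro x hx
        have : (0:ℝ) < x := lt_of_lt_of_le one_pos hx
        exact (gfun_hasDeriv this).continuousAt.continuousWithinAt
      · intro x hx
        rw [interior_Ici] at hx
        have : (0:ℝ) < x := lt_trans one_pos hx
        exact (gfun_hasDeriv this).differentiableAt.differentiableWithinAt
      · intro x hx
        rw [interior_Ici] at hx
        have hx0 : (0:ℝ) < x := lt_trans one_pos hx
        rw [(gfun_hasDeriv hx0).deriv]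
        have := hfun_nonneg (le_of_lt hx)
        linarith
    have := hmono (Set.mem_Ici.2 le_rfl) (Set.mem_Ici.2 h) h
    rw [hg1] at this; exact this
  · have hanti : AntitoneOn gfun (Set.Icc 0 1) := by
      apply antitoneOn_of_deriv_nonpos (convex_Icc 0 1)
      · have hc : Continuous gfun := by
          unfold gfun
          exact ((continuous_const.mul continuous_id |>.add continuous_const).mul
            ((Real.continuous_mul_log.sub continuous_id).add continuous_const)).sub
            (continuous_const.mul ((continuous_id.sub continuous_const).pow 2))
        exact hc.continuousOn
      · intro x hx
        rw [interior_Icc] at hx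
        exact (gfun_hasDeriv hx.1).differentiableAt.differentiableWithinAt
      · intro x hx
        rw [interior_Icc] at hx
        rw [(gfun_hasDeriv hx.1).deriv]
        have := hfun_nonpos hx.1 (le_of_lt hx.2)
        linarith
    have := hanti (Set.mem_Icc.2 ⟨hr, le_of_lt h⟩) (Set.mem_Icc.2 ⟨zero_le_one, le_rfl⟩) (le_of_lt h)
    rw [hg1] at this; exact this

/-- pointwise inequality -/
private lemma pointwise_ineq {r : ℝ} (hr : 0 ≤ r) :
    3*(r-1)^2 ≤ (2*r+4)*(r*Real.log r - r + 1) := by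
  have := gfun_nonneg hr
  unfold gfun at this
  linarith


private lemma weighted_pointwise {u c : ℝ} (hu : 0 < u) (hc : 0 ≤ c) :
    3*(c-u)^2 ≤ (2*c+4*u)*(c*Real.log (c/u) - c + u) := by
  have hr : 0 ≤ c/u := by positivity
  have hp := pointwise_ineq hr
  have h2 : u^2 * (3*(c/u-1)^2) ≤ u^2 * ((2*(c/u)+4)*((c/u)*Real.log (c/u) - c/u + 1)) :=
    mul_le_mul_of_nonneg_left hp (sq_nonneg u)
  have hne : u ≠ 0 := hu.ne'
  calc 3*(c-u)^2 = u^2 * (3*(c/u-1)^2) := by field_simp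
    _ ≤ u^2 * ((2*(c/u)+4)*((c/u)*Real.log (c/u) - c/u + 1)) := h2
    _ = (2*c+4*u)*(c*Real.log (c/u) - c + u) := by field_simp

private lemma node_pinsker (M : ℕ) (hM : 1 ≤ M) (c : ℕ → ℝ)
    (hc : ∀ i ∈ Finset.range M, 0 ≤ c i) {w : ℝ}
    (hw : w = ∑ i ∈ Finset.range M, c i) :
    0 ≤ ∑ i ∈ Finset.range M, c i * Real.log ((M:ℝ) * c i / w) ∧
    (∑ i ∈ Finset.range M, |c i - w / M|)^2 ≤
      2 * w * ∑ i ∈ Finset.range M, c i * Real.log ((M:ℝ) * c i / w) := by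
  rcases eq_or_lt_of_le (hw ▸ Finset.sum_nonneg hc) with hw0 | hwpos
  · -- w = 0 : all c i = 0
    have hall : ∀ i ∈ Finset.range M, c i = 0 := by
      intro i hi
      exact (Finset.sum_eq_zero_iff_of_nonneg hc).1 (hw ▸ hw0.symm) i hi
    constructor
    · apply Finset.sum_nonneg; intro i hi; rw [hall i hi]; simp
    · rw [Finset.sum_congr rfl (fun i hi => by rw [hall i hi]; simp : ∀ i ∈ Finset.range M, c i * Real.log ((M:ℝ)*c i/w) = 0)]
      rw [Finset.sum_congr rfl (fun i hi => by rw [hall i hi, ← hw0]; simp : ∀ i ∈ Finset.range M, |c i - w/M| = 0)]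
      simp
  · set u : ℝ := w / M with hu_def
    have hM0 : (0:ℝ) < M := by exact_mod_cast hM
    have hu : 0 < u := div_pos hwpos hM0
    have hwne : w ≠ 0 := hwpos.ne'
    -- rewrite log arguments
    have hlogeq : ∀ i, (M:ℝ) * c i / w = c i / u := by
      intro i
      rw [hu_def, div_div_eq_mul_div]
      ring
    set t : ℕ → ℝ := fun i => c i * Real.log (c i / u) - c i + u with ht_def
    have hkey : ∀ i ∈ Finset.range M, 3*(c i - u)^2 ≤ (2*c i+4*u) * t i := by
      intro i hi; exact weighted_pointwise hu (hc i hi)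
    have ht_nonneg : ∀ i ∈ Finset.range M, 0 ≤ t i := by
      intro i hi
      have h1 := hkey i hi
      have h2 : 0 < 2*c i + 4*u := by have := hc i hi; linarith
      nlinarith [sq_nonneg (c i - u)]
    have hsum_t : ∑ i ∈ Finset.range M, t i
        = ∑ i ∈ Finset.range M, c i * Real.log ((M:ℝ) * c i / w) := by
      simp only [ht_def, hlogeq]
      rw [Finset.sum_add_distrib, Finset.sum_sub_distrib, ← hw]
      simp [hu_def]
      field_simp
      ring_nf
      refine Finset.sum_congr rfl (fun x _ => ?_)
      ring_nf
    constructor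
    · rw [← hsum_t]; exact Finset.sum_nonneg ht_nonneg
    · -- Cauchy-Schwarz
      have habs : ∀ i ∈ Finset.range M, |c i - w/M| ≤
          Real.sqrt ((2*c i+4*u)/3) * Real.sqrt (t i) := by
        intro i hi
        rw [← hu_def, ← Real.sqrt_mul (by have := hc i hi; positivity), ← Real.sqrt_sq_eq_abs]
        apply Real.sqrt_le_sqrt
        have h1 := hkey i hi
        have heq : (2*c i + 4*u)/3 * t i = ((2*c i + 4*u) * t i)/3 := by ring
        rw [heq]
        calc (c i - u)^2 = 3*(c i - u)^2/3 := by ring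
          _ ≤ (2*c i+4*u)*t i/3 := (div_le_div_iff_of_pos_right (by norm_num)).mpr h1
      have hcs := Real.sum_mul_le_sqrt_mul_sqrt (Finset.range M)
          (fun i => Real.sqrt ((2*c i+4*u)/3)) (fun i => Real.sqrt (t i))
      have hstep : ∑ i ∈ Finset.range M, |c i - w/M| ≤
          Real.sqrt (∑ i ∈ Finset.range M, ((2*c i+4*u)/3)) *
          Real.sqrt (∑ i ∈ Finset.range M, t i) := by
        refine le_trans (Finset.sum_le_sum habs) (le_trans hcs ?_)
        apply mul_le_mul
        · apply Real.sqrt_le_sqrt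
          apply Finset.sum_le_sum
          intro i hi
          rw [Real.sq_sqrt (by have := hc i hi; positivity)]
        · apply Real.sqrt_le_sqrt
          apply Finset.sum_le_sum
          intro i hi
          rw [Real.sq_sqrt (ht_nonneg i hi)]
        · positivity
        · positivity
      have hsum1 : ∑ i ∈ Finset.range M, ((2*c i+4*u)/3) = 2*w := by
        have h1 : ∑ i ∈ Finset.range M, ((2*c i+4*u)/3)
            = (2*(∑ i ∈ Finset.range M, c i) + (M:ℝ)*(4*u))/3 := by
          rw [← Finset.sum_div, Finset.sum_add_distrib, ← Finset.mul_sum,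
            Finset.sum_const, Finset.card_range, nsmul_eq_mul]
        rw [h1, ← hw, hu_def]
        field_simp
        ring
      rw [hsum1, hsum_t] at hstep
      have hnn : 0 ≤ ∑ i ∈ Finset.range M, |c i - w/M| :=
        Finset.sum_nonneg (fun i _ => abs_nonneg _)
      have hD : 0 ≤ ∑ i ∈ Finset.range M, c i * Real.log ((M:ℝ) * c i / w) := by
        rw [← hsum_t]; exact Finset.sum_nonneg ht_nonneg
      calc (∑ i ∈ Finset.range M, |c i - w/M|)^2
          ≤ (Real.sqrt (2*w) * Real.sqrt (∑ i ∈ Finset.range M, c i * Real.log ((M:ℝ)*c i/w)))^2 := by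
            apply pow_le_pow_left₀ hnn hstep
        _ = 2 * w * ∑ i ∈ Finset.range M, c i * Real.log ((M:ℝ)*c i/w) := by
            rw [mul_pow, Real.sq_sqrt (by linarith), Real.sq_sqrt hD]

private lemma iSum_split (A : ℕ → ℝ) (l m : ℕ) :
    ∀ K : ℕ, ∑ k ∈ Finset.range K, iSum A (l + k*m) (l + k*m + m) = iSum A l (l + K*m) := by
  intro K
  induction K with
  | zero => simp [iSum]
  | succ K ih =>
    rw [Finset.sum_range_succ, ih]
    unfold iSum
    rw [show l + (K+1)*m = l + K*m + m by ring]
    exact Finset.sum_Ioc_consecutive _ (by omega) (by omega)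

private lemma sum_range_mul' (f : ℕ → ℝ) (K m : ℕ) :
    ∑ j ∈ Finset.range (K*m), f j = ∑ k ∈ Finset.range K, ∑ i ∈ Finset.range m, f (k*m+i) := by
  induction K with
  | zero => simp
  | succ K ih =>
    rw [Finset.sum_range_succ, ← ih, show (K+1)*m = K*m + m by ring, Finset.sum_range_add]

private noncomputable def Wnode (M : ℕ) (A : ℕ → ℝ) (s k : ℕ) : ℝ :=
  iSum A (k*M^s) (k*M^s + M^s)

/-- child identification -/
private lemma child_eq (M : ℕ) (A : ℕ → ℝ) {s : ℕ} (hs : 1 ≤ s) (k i : ℕ) :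
    iSum A (k*M^s + i * M^(s-1)) (k*M^s + (i+1) * M^(s-1)) = Wnode M A (s-1) (k*M+i) := by
  obtain ⟨s', rfl⟩ : ∃ s', s = s'+1 := ⟨s-1, by omega⟩
  unfold Wnode
  simp only [Nat.add_sub_cancel]
  congr 1
  · rw [pow_succ]; ring
  · rw [pow_succ]; ring

/-- sum of children equals the parent -/
private lemma children_sum (M : ℕ) (A : ℕ → ℝ) {s : ℕ} (hs : 1 ≤ s) (k : ℕ) :
    ∑ i ∈ Finset.range M, Wnode M A (s-1) (k*M+i) = Wnode M A s k := by
  have h := iSum_split A (k*M^s) (M^(s-1)) M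
  have h2 : ∀ i ∈ Finset.range M,
      iSum A (k*M^s + i*M^(s-1)) (k*M^s + i*M^(s-1) + M^(s-1)) = Wnode M A (s-1) (k*M+i) := by
    intro i hi
    rw [show k*M^s + i*M^(s-1) + M^(s-1) = k*M^s + (i+1)*M^(s-1) by ring]
    exact child_eq M A hs k i
  rw [Finset.sum_congr rfl h2] at h
  rw [h]
  unfold Wnode
  congr 2
  obtain ⟨s', rfl⟩ : ∃ s', s = s'+1 := ⟨s-1, by omega⟩
  simp only [Nat.add_sub_cancel, pow_succ]
  ring

/-- nonnegativity of node sums -/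
private lemma Wnode_nonneg (M S : ℕ) (A : ℕ → ℝ)
    (hnn : ∀ x ∈ Finset.Icc 1 (M ^ S), 0 ≤ A x) {s k : ℕ}
    (hs : s ≤ S) (hk : k < M^(S-s)) : 0 ≤ Wnode M A s k := by
  unfold Wnode iSum
  apply Finset.sum_nonneg
  intro x hx
  rw [Finset.mem_Ioc] at hx
  apply hnn
  rw [Finset.mem_Icc]
  constructor
  · omega
  · have h0 : (k+1) * M^s ≤ M^(S-s) * M^s := Nat.mul_le_mul_right _ (by omega)
    have he : M^(S-s) * M^s = M^S := by
      rw [← pow_add]; congr 1; omega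
    have h2 : k*M^s + M^s = (k+1)*M^s := by ring
    omega

/-- per-scale total equals the grand total -/
private lemma Wnode_scale_sum (M S : ℕ) (A : ℕ → ℝ) {s : ℕ} (hs : s ≤ S) :
    ∑ k ∈ Finset.range (M^(S-s)), Wnode M A s k = iSum A 0 (M^S) := by
  have h := iSum_split A 0 (M^s) (M^(S-s))
  simp only [zero_add] at h
  unfold Wnode
  rw [h]
  congr 1
  rw [← pow_add]
  congr 1
  omega

private noncomputable def Dnode (M : ℕ) (A : ℕ → ℝ) (s k : ℕ) : ℝ :=
  ∑ i ∈ Finset.range M, Wnode M A (s-1) (k*M+i) *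
    Real.log ((M:ℝ) * Wnode M A (s-1) (k*M+i) / Wnode M A s k)

private noncomputable def Esum (M S : ℕ) (A : ℕ → ℝ) (s : ℕ) : ℝ :=
  ∑ k ∈ Finset.range (M^(S-s)), Wnode M A s k * Real.log (Wnode M A s k)

/-- entropy identity for one node -/
private lemma Dnode_eq (M S : ℕ) (hM : 1 ≤ M) (A : ℕ → ℝ)
    (hnn : ∀ x ∈ Finset.Icc 1 (M ^ S), 0 ≤ A x) {s k : ℕ}
    (hs1 : 1 ≤ s) (hs : s ≤ S) (hk : k < M^(S-s)) :
    Dnode M A s k = (∑ i ∈ Finset.range M,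
        Wnode M A (s-1) (k*M+i) * Real.log (Wnode M A (s-1) (k*M+i)))
      + Wnode M A s k * Real.log M - Wnode M A s k * Real.log (Wnode M A s k) := by
  have hchild_nonneg : ∀ i ∈ Finset.range M, 0 ≤ Wnode M A (s-1) (k*M+i) := by
    intro i hi
    apply Wnode_nonneg M S A hnn (by omega)
    rw [Finset.mem_range] at hi
    calc k*M+i < (k+1)*M := by nlinarith
      _ ≤ M^(S-s)*M := Nat.mul_le_mul_right _ (by omega)
      _ = M^(S-(s-1)) := by
          have h : S - (s-1) = (S-s)+1 := by omega
          rw [h, pow_succ]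
  have hw : Wnode M A s k = ∑ i ∈ Finset.range M, Wnode M A (s-1) (k*M+i) :=
    (children_sum M A hs1 k).symm
  rcases eq_or_lt_of_le (hw ▸ Finset.sum_nonneg hchild_nonneg) with h0 | hpos
  · have hall : ∀ i ∈ Finset.range M, Wnode M A (s-1) (k*M+i) = 0 :=
      (Finset.sum_eq_zero_iff_of_nonneg hchild_nonneg).1 (hw ▸ h0.symm)
    have hz : Wnode M A s k = 0 := h0.symm
    unfold Dnode
    have e1 : ∀ i ∈ Finset.range M, Wnode M A (s-1) (k*M+i) *
        Real.log ((M:ℝ) * Wnode M A (s-1) (k*M+i) / Wnode M A s k) = (0:ℝ) := by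
      intro i hi; rw [hall i hi]; simp
    have e2 : ∀ i ∈ Finset.range M, Wnode M A (s-1) (k*M+i) *
        Real.log (Wnode M A (s-1) (k*M+i)) = (0:ℝ) := by
      intro i hi; rw [hall i hi]; simp
    rw [Finset.sum_congr rfl e1, Finset.sum_congr rfl e2, hz]
    simp
  · have hM0 : (M:ℝ) ≠ 0 := by positivity
    have hwne : Wnode M A s k ≠ 0 := hpos.ne'
    unfold Dnode
    have hterm : ∀ i ∈ Finset.range M,
        Wnode M A (s-1) (k*M+i) * Real.log ((M:ℝ) * Wnode M A (s-1) (k*M+i) / Wnode M A s k)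
        = Wnode M A (s-1) (k*M+i) * Real.log (Wnode M A (s-1) (k*M+i))
          + Wnode M A (s-1) (k*M+i) * Real.log M
          - Wnode M A (s-1) (k*M+i) * Real.log (Wnode M A s k) := by
      intro i hi
      rcases eq_or_lt_of_le (hchild_nonneg i hi) with hc0 | hcpos
      · rw [← hc0]; simp
      · rw [Real.log_div (by positivity) hwne, Real.log_mul hM0 hcpos.ne']
        ring
    rw [Finset.sum_congr rfl hterm]
    rw [Finset.sum_sub_distrib, Finset.sum_add_distrib, ← Finset.sum_mul, ← Finset.sum_mul, ← hw]

/-- per-scale sum of Dnode -/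
private lemma Dnode_scale_sum (M S : ℕ) (hM : 1 ≤ M) (A : ℕ → ℝ)
    (hnn : ∀ x ∈ Finset.Icc 1 (M ^ S), 0 ≤ A x) {s : ℕ}
    (hs1 : 1 ≤ s) (hs : s ≤ S) :
    ∑ k ∈ Finset.range (M^(S-s)), Dnode M A s k
      = Esum M S A (s-1) - Esum M S A s + iSum A 0 (M^S) * Real.log M := by
  have h1 : ∀ k ∈ Finset.range (M^(S-s)), Dnode M A s k
      = (∑ i ∈ Finset.range M,
          Wnode M A (s-1) (k*M+i) * Real.log (Wnode M A (s-1) (k*M+i)))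
        + Wnode M A s k * Real.log M - Wnode M A s k * Real.log (Wnode M A s k) := by
    intro k hk
    exact Dnode_eq M S hM A hnn hs1 hs (Finset.mem_range.1 hk)
  rw [Finset.sum_congr rfl h1, Finset.sum_sub_distrib, Finset.sum_add_distrib]
  have h2 : ∑ k ∈ Finset.range (M^(S-s)), ∑ i ∈ Finset.range M,
      Wnode M A (s-1) (k*M+i) * Real.log (Wnode M A (s-1) (k*M+i)) = Esum M S A (s-1) := by
    rw [← sum_range_mul' (fun j => Wnode M A (s-1) j * Real.log (Wnode M A (s-1) j)) (M^(S-s)) M]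
    unfold Esum
    have h : S - (s-1) = (S-s)+1 := by omega
    rw [h, pow_succ]
  have h3 : ∑ k ∈ Finset.range (M^(S-s)), Wnode M A s k * Real.log M
      = iSum A 0 (M^S) * Real.log M := by
    rw [← Finset.sum_mul, Wnode_scale_sum M S A hs]
  rw [h2, h3]
  unfold Esum
  ring

private lemma telescope_Icc (f : ℕ → ℝ) (S : ℕ) :
    ∑ s ∈ Finset.Icc 1 S, (f (s-1) - f s) = f 0 - f S := by
  rw [show Finset.Icc 1 S = Finset.Ico 1 (S+1) by rw [Finset.Ico_add_one_right_eq_Icc],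
    Finset.sum_Ico_eq_sum_range]
  have : ∀ i ∈ Finset.range (S+1-1), f (1+i-1) - f (1+i) = f i - f (i+1) := by
    intro i hi
    congr 2 <;> omega
  rw [Finset.sum_congr rfl this, Finset.sum_range_sub' f]
  simp

private lemma iSum_zero (A : ℕ → ℝ) (n : ℕ) : iSum A 0 n = ∑ x ∈ Finset.Icc 1 n, A x := by
  unfold iSum
  congr 1

private lemma Esum_top (M S : ℕ) (A : ℕ → ℝ) :
    Esum M S A S = iSum A 0 (M^S) * Real.log (iSum A 0 (M^S)) := by
  unfold Esum
  rw [Nat.sub_self, pow_zero, Finset.sum_range_one]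
  unfold Wnode
  norm_num

private lemma Wnode_zero (M : ℕ) (A : ℕ → ℝ) (k : ℕ) : Wnode M A 0 k = A (k+1) := by
  unfold Wnode iSum
  rw [pow_zero, mul_one, Nat.Ioc_succ_singleton, Finset.sum_singleton]

/-- child nonneg helper -/
private lemma child_nonneg (M S : ℕ) (A : ℕ → ℝ)
    (hnn : ∀ x ∈ Finset.Icc 1 (M ^ S), 0 ≤ A x) {s k : ℕ}
    (hs1 : 1 ≤ s) (hs : s ≤ S) (hk : k < M^(S-s)) :
    ∀ i ∈ Finset.range M, 0 ≤ Wnode M A (s-1) (k*M+i) := by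
  intro i hi
  apply Wnode_nonneg M S A hnn (by omega)
  rw [Finset.mem_range] at hi
  calc k*M+i < (k+1)*M := by nlinarith
    _ ≤ M^(S-s)*M := Nat.mul_le_mul_right _ (by omega)
    _ = M^(S-(s-1)) := by
        have h : S - (s-1) = (S-s)+1 := by omega
        rw [h, pow_succ]


/-- For `M ≥ 2`, `S ≥ 1`, `n = M^S`, and a nonnegative sequence `A` with
positive sum, `treemd_{M,S}(A) ≤ (∑ a_x) · sqrt(2·S·ln(n·(max_x a_x)/(∑ a_x)))`. -/
theorem stmt3 (M S : ℕ) (hM : 2 ≤ M) (hS : 1 ≤ S) (A : ℕ → ℝ)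
    (hnn : ∀ x ∈ Finset.Icc 1 (M ^ S), 0 ≤ A x)
    (hpos : 0 < ∑ x ∈ Finset.Icc 1 (M ^ S), A x) :
    treemd M S A ≤
      (∑ x ∈ Finset.Icc 1 (M ^ S), A x) *
        Real.sqrt (2 * S *
          Real.log ((M ^ S : ℝ) *
            ((Finset.Icc 1 (M ^ S)).sup'
                (Finset.nonempty_Icc.mpr (Nat.one_le_pow S M (by omega))) A) /
            (∑ x ∈ Finset.Icc 1 (M ^ S), A x))) := by
  unfold treemd
  have hM1 : 1 ≤ M := by omega
  set maxA := (Finset.Icc 1 (M ^ S)).sup'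
      (Finset.nonempty_Icc.mpr (Nat.one_le_pow S M (by omega))) A with hmaxA_def
  have hTeq : ∑ x ∈ Finset.Icc 1 (M ^ S), A x = iSum A 0 (M^S) := (iSum_zero A _).symm
  set T := iSum A 0 (M^S) with hT_def
  rw [hTeq] at hpos ⊢
  set L := Real.log ((M ^ S : ℝ) * maxA / T) with hL_def
  -- basic facts
  have hnM : (0:ℝ) < (M:ℝ)^S := by positivity
  have hmax_ge : ∀ x ∈ Finset.Icc 1 (M^S), A x ≤ maxA := fun x hx => Finset.le_sup' A hx
  have hT_le : T ≤ (M^S : ℝ) * maxA := by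
    have h1 : ∑ x ∈ Finset.Icc 1 (M ^ S), A x ≤ ∑ x ∈ Finset.Icc 1 (M ^ S), maxA :=
      Finset.sum_le_sum hmax_ge
    rw [Finset.sum_const, Nat.card_Icc, nsmul_eq_mul] at h1
    rw [← hTeq]
    calc ∑ x ∈ Finset.Icc 1 (M ^ S), A x ≤ ((M^S + 1 - 1 : ℕ) : ℝ) * maxA := h1
      _ = (M^S : ℝ) * maxA := by push_cast [Nat.add_sub_cancel]; ring
  have hmax_pos : 0 < maxA := by
    by_contra h
    push_neg at h
    have : (M^S : ℝ) * maxA ≤ 0 := by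
      apply mul_nonpos_of_nonneg_of_nonpos (le_of_lt (by positivity)) h
    linarith
  have hL_nonneg : 0 ≤ L := by
    apply Real.log_nonneg
    rw [le_div_iff₀ hpos]
    simpa using hT_le
  -- entropy bound at leaves
  have hEsum0 : Esum M S A 0 ≤ T * Real.log maxA := by
    unfold Esum
    have hterm : ∀ k ∈ Finset.range (M^(S-0)), Wnode M A 0 k * Real.log (Wnode M A 0 k)
        ≤ Wnode M A 0 k * Real.log maxA := by
      intro k hk
      rw [Wnode_zero]
      rw [Finset.mem_range, Nat.sub_zero] at hk
      have hk' : k + 1 ∈ Finset.Icc 1 (M^S) := by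
        rw [Finset.mem_Icc]
        omega
      rcases eq_or_lt_of_le (hnn _ hk') with h0 | hp
      · rw [← h0]; simp
      · exact mul_le_mul_of_nonneg_left
          (Real.log_le_log hp (hmax_ge _ hk')) (le_of_lt hp)
    calc ∑ k ∈ Finset.range (M^(S-0)), Wnode M A 0 k * Real.log (Wnode M A 0 k)
        ≤ ∑ k ∈ Finset.range (M^(S-0)), Wnode M A 0 k * Real.log maxA :=
          Finset.sum_le_sum hterm
      _ = (∑ k ∈ Finset.range (M^(S-0)), Wnode M A 0 k) * Real.log maxA := by
          rw [Finset.sum_mul]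
      _ = T * Real.log maxA := by rw [Wnode_scale_sum M S A (by omega)]
  -- total entropy identity and bound
  have hDtot_eq : ∑ s ∈ Finset.Icc 1 S, (∑ k ∈ Finset.range (M^(S-s)), Dnode M A s k)
      = Esum M S A 0 - Esum M S A S + (S:ℝ) * (T * Real.log M) := by
    have h1 : ∀ s ∈ Finset.Icc 1 S, ∑ k ∈ Finset.range (M^(S-s)), Dnode M A s k
        = (Esum M S A (s-1) - Esum M S A s) + T * Real.log M := by
      intro s hs
      rw [Finset.mem_Icc] at hs
      rw [Dnode_scale_sum M S hM1 A hnn hs.1 hs.2]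
    rw [Finset.sum_congr rfl h1, Finset.sum_add_distrib, telescope_Icc, Finset.sum_const,
      Nat.card_Icc, nsmul_eq_mul]
    norm_num
  have hDtot_le : ∑ s ∈ Finset.Icc 1 S, (∑ k ∈ Finset.range (M^(S-s)), Dnode M A s k)
      ≤ T * L := by
    have hL_eq : L = (S:ℝ) * Real.log M + Real.log maxA - Real.log T := by
      rw [hL_def, Real.log_div (by positivity) hpos.ne', Real.log_mul (by positivity)
        hmax_pos.ne']
      rw [show ((M:ℝ)^S) = ((M:ℝ))^(S:ℕ) from rfl, Real.log_pow]
    have h2 : T * L = T * Real.log maxA - T * Real.log T + (S:ℝ) * (T * Real.log M) := by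
      rw [hL_eq]; ring
    rw [hDtot_eq, Esum_top, h2, ← hT_def]
    linarith [hEsum0]
  -- per-node bound
  have hnode : ∀ s ∈ Finset.Icc 1 S, ∀ k ∈ Finset.range (M^(S-s)),
      (0 ≤ Dnode M A s k) ∧
      mdAt M s (k*M^s) A ≤ Real.sqrt (Wnode M A s k) * Real.sqrt (2 * Dnode M A s k) := by
    intro s hs k hk
    rw [Finset.mem_Icc] at hs
    rw [Finset.mem_range] at hk
    have hchild := child_nonneg M S A hnn hs.1 hs.2 hk
    have hw : Wnode M A s k = ∑ i ∈ Finset.range M, Wnode M A (s-1) (k*M+i) :=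
      (children_sum M A hs.1 k).symm
    have hp := node_pinsker M hM1 (fun i => Wnode M A (s-1) (k*M+i)) hchild hw
    have hmd : mdAt M s (k*M^s) A
        = ∑ i ∈ Finset.range M, |Wnode M A (s-1) (k*M+i) - Wnode M A s k / M| := by
      unfold mdAt
      apply Finset.sum_congr rfl
      intro i hi
      rw [child_eq M A hs.1 k i,
        show (1/(M:ℝ)) * iSum A (k*M^s) (k*M^s + M^s) = Wnode M A s k / M from by
          unfold Wnode; ring]
    have hWnn : 0 ≤ Wnode M A s k := Wnode_nonneg M S A hnn hs.2 hk
    refine ⟨hp.1, ?_⟩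
    rw [hmd, ← Real.sqrt_mul hWnn]
    apply Real.le_sqrt_of_sq_le
    calc (∑ i ∈ Finset.range M, |Wnode M A (s-1) (k*M+i) - Wnode M A s k / M|)^2
        ≤ 2 * Wnode M A s k * Dnode M A s k := hp.2
      _ = Wnode M A s k * (2 * Dnode M A s k) := by ring
  -- per-scale Cauchy-Schwarz
  have hscale : ∀ s ∈ Finset.Icc 1 S,
      ∑ k ∈ Finset.range (M^(S-s)), mdAt M s (k*M^s) A
      ≤ Real.sqrt T * Real.sqrt (2 * ∑ k ∈ Finset.range (M^(S-s)), Dnode M A s k) := by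
    intro s hs
    have hs' := Finset.mem_Icc.1 hs
    have h1 : ∑ k ∈ Finset.range (M^(S-s)), mdAt M s (k*M^s) A
        ≤ ∑ k ∈ Finset.range (M^(S-s)),
            Real.sqrt (Wnode M A s k) * Real.sqrt (2 * Dnode M A s k) :=
      Finset.sum_le_sum (fun k hk => (hnode s hs k hk).2)
    have hcs := Finset.sum_mul_sq_le_sq_mul_sq (Finset.range (M^(S-s)))
      (fun k => Real.sqrt (Wnode M A s k)) (fun k => Real.sqrt (2 * Dnode M A s k))
    have e1 : ∑ k ∈ Finset.range (M^(S-s)), (Real.sqrt (Wnode M A s k))^2 = T := by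
      rw [Finset.sum_congr rfl (fun k hk => Real.sq_sqrt
        (Wnode_nonneg M S A hnn hs'.2 (Finset.mem_range.1 hk)))]
      exact Wnode_scale_sum M S A hs'.2
    have e2 : ∑ k ∈ Finset.range (M^(S-s)), (Real.sqrt (2 * Dnode M A s k))^2
        = 2 * ∑ k ∈ Finset.range (M^(S-s)), Dnode M A s k := by
      rw [Finset.sum_congr rfl (fun k hk => Real.sq_sqrt
        (by linarith [(hnode s hs k hk).1] : (0:ℝ) ≤ 2 * Dnode M A s k))]
      rw [Finset.mul_sum]
    rw [e1, e2] at hcs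
    refine le_trans h1 ?_
    rw [← Real.sqrt_mul (by rw [← hTeq] at hpos ⊢; exact le_of_lt hpos : (0:ℝ) ≤ T)]
    exact Real.le_sqrt_of_sq_le hcs
  -- sum over scales
  have hT_nonneg : (0:ℝ) ≤ T := le_of_lt hpos
  have hDs_nonneg : ∀ s ∈ Finset.Icc 1 S,
      0 ≤ ∑ k ∈ Finset.range (M^(S-s)), Dnode M A s k :=
    fun s hs => Finset.sum_nonneg (fun k hk => (hnode s hs k hk).1)
  have hstep3 : ∑ s ∈ Finset.Icc 1 S,
        Real.sqrt (2 * ∑ k ∈ Finset.range (M^(S-s)), Dnode M A s k)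
      ≤ Real.sqrt ((S:ℝ) * (2 * (T * L))) := by
    apply Real.le_sqrt_of_sq_le
    have hcs := sq_sum_le_card_mul_sum_sq (s := Finset.Icc 1 S)
      (f := fun s => Real.sqrt (2 * ∑ k ∈ Finset.range (M^(S-s)), Dnode M A s k))
    have e3 : ∑ s ∈ Finset.Icc 1 S,
        (Real.sqrt (2 * ∑ k ∈ Finset.range (M^(S-s)), Dnode M A s k))^2
        = 2 * ∑ s ∈ Finset.Icc 1 S, (∑ k ∈ Finset.range (M^(S-s)), Dnode M A s k) := by
      rw [Finset.sum_congr rfl (fun s hs => Real.sq_sqrt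
        (by linarith [hDs_nonneg s hs]))]
      rw [Finset.mul_sum]
    rw [e3] at hcs
    have hcard : ((Finset.Icc 1 S).card : ℝ) = (S:ℝ) := by
      rw [Nat.card_Icc]
      push_cast [Nat.add_sub_cancel]
      ring
    calc (∑ s ∈ Finset.Icc 1 S,
          Real.sqrt (2 * ∑ k ∈ Finset.range (M^(S-s)), Dnode M A s k))^2
        ≤ ((Finset.Icc 1 S).card : ℝ) *
          (2 * ∑ s ∈ Finset.Icc 1 S, (∑ k ∈ Finset.range (M^(S-s)), Dnode M A s k)) := hcs
      _ ≤ (S:ℝ) * (2 * (T * L)) := by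
          rw [hcard]
          apply mul_le_mul_of_nonneg_left _ (by positivity)
          linarith [hDtot_le]
  -- final assembly
  calc ∑ s ∈ Finset.Icc 1 S, ∑ k ∈ Finset.range (M ^ (S - s)), mdAt M s (k * M ^ s) A
      ≤ ∑ s ∈ Finset.Icc 1 S, Real.sqrt T *
          Real.sqrt (2 * ∑ k ∈ Finset.range (M^(S-s)), Dnode M A s k) :=
        Finset.sum_le_sum hscale
    _ = Real.sqrt T * ∑ s ∈ Finset.Icc 1 S,
          Real.sqrt (2 * ∑ k ∈ Finset.range (M^(S-s)), Dnode M A s k) := by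
        rw [Finset.mul_sum]
    _ ≤ Real.sqrt T * Real.sqrt ((S:ℝ) * (2 * (T * L))) := by
        apply mul_le_mul_of_nonneg_left hstep3 (Real.sqrt_nonneg _)
    _ = T * Real.sqrt (2 * (S:ℝ) * L) := by
        rw [← Real.sqrt_mul hT_nonneg, show T * ((S:ℝ) * (2 * (T * L))) = T^2 * (2 * (S:ℝ) * L)
          from by ring, Real.sqrt_mul (sq_nonneg T), Real.sqrt_sq hT_nonneg]
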